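/- Let X be an n×p real matrix of rank p with n ≥ p, τ > 0, and D a p×p diagonal matrix with positive diagonal entries. If μ = (XᵀX + D/τ)⁻¹ Xᵀ y for y ∈ ℝⁿ, then ‖Xμ‖² ≤ yᵀ X (XᵀX)⁻¹ Xᵀ y. -/

import Mathlib

open Matrix

theorem norm_X_mu_le {n p : ℕ} (hnp : p ≤ n) (X : Matrix (Fin n) (Fin p) ℝ)
    (hrank : X.rank = p) (y : Fin n → ℝ) (τ : ℝ) (hτ : 0 < τ)
    (d : Fin p → ℝ) (hd : ∀ i, 0 < d i)
    (μ : Fin p → ℝ)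
    (hμ : μ = (Xᵀ * X + τ⁻¹ • Matrix.diagonal d)⁻¹ *ᵥ (Xᵀ *ᵥ y)) :
    (X *ᵥ μ) ⬝ᵥ (X *ᵥ μ) ≤ y ⬝ᵥ (X *ᵥ ((Xᵀ * X)⁻¹ *ᵥ (Xᵀ *ᵥ y))) := by
  classical
  set A : Matrix (Fin p) (Fin p) ℝ := Xᵀ * X with hAdef
  set E : Matrix (Fin p) (Fin p) ℝ := τ⁻¹ • Matrix.diagonal d with hEdef
  -- injectivity of mulVec
  have hinj : Function.Injective X.mulVecLin := by
    rw [← LinearMap.ker_eq_bot]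
    have h1 := X.mulVecLin.finrank_range_add_finrank_ker
    have h2 : Module.finrank ℝ (LinearMap.range X.mulVecLin) = p := hrank
    rw [h2, Module.finrank_pi] at h1
    simp only [Fintype.card_fin] at h1
    have h3 : Module.finrank ℝ (LinearMap.ker X.mulVecLin) = 0 := by omega
    exact Submodule.finrank_eq_zero.mp h3
  -- Positive definiteness of A
  have hA : A.PosDef := by
    refine PosDef.of_dotProduct_mulVec_pos (isHermitian_conjTranspose_mul_self X) (fun x hx => ?_)
    have hXx : X *ᵥ x ≠ 0 := by
      intro h
      apply hx
      exact hinj (by simpa [Matrix.mulVecLin_apply] using h)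
    have : x ⬝ᵥ (A *ᵥ x) = (X *ᵥ x) ⬝ᵥ (X *ᵥ x) := by
      rw [hAdef, ← Matrix.mulVec_mulVec, Matrix.dotProduct_mulVec, Matrix.vecMul_transpose]
    rw [star_trivial, this]
    simpa using (dotProduct_star_self_pos_iff (v := X *ᵥ x)).mpr hXx
  have hE : E.PosDef := by
    rw [hEdef, ← Matrix.diagonal_smul]
    exact Matrix.PosDef.diagonal (fun i => by
      simpa using mul_pos (inv_pos.mpr hτ) (hd i))
  have hB : (A + E).PosDef := hA.add hE
  -- invertibility
  have hBdet : IsUnit (A + E).det := (isUnit_iff_isUnit_det _).mp hB.isUnit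
  have hAdet : IsUnit A.det := (isUnit_iff_isUnit_det _).mp hA.isUnit
  set z : Fin p → ℝ := Xᵀ *ᵥ y with hzdef
  have hz : z = A *ᵥ μ + E *ᵥ μ := by
    rw [hμ, ← Matrix.add_mulVec, Matrix.mulVec_mulVec, Matrix.mul_nonsing_inv _ hBdet,
      Matrix.one_mulVec]
  set u : Fin p → ℝ := E *ᵥ μ with hudef
  -- symmetry of A
  have hAsymm : Aᵀ = A := by
    rw [hAdef, Matrix.transpose_mul, Matrix.transpose_transpose]
  -- key dot product identities
  have key1 : ∀ (a : Fin n → ℝ) (v : Fin p → ℝ), (Xᵀ *ᵥ a) ⬝ᵥ v = a ⬝ᵥ (X *ᵥ v) := by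
    intro a v
    rw [dotProduct_comm, Matrix.dotProduct_mulVec, Matrix.vecMul_transpose, dotProduct_comm]
  -- LHS = μ ⬝ᵥ (A *ᵥ μ)
  have hLHS : (X *ᵥ μ) ⬝ᵥ (X *ᵥ μ) = μ ⬝ᵥ (A *ᵥ μ) := by
    rw [hAdef, ← Matrix.mulVec_mulVec]
    conv_rhs => rw [Matrix.dotProduct_mulVec, Matrix.vecMul_transpose]
  -- RHS = z ⬝ᵥ (A⁻¹ *ᵥ z)
  have hRHS : y ⬝ᵥ (X *ᵥ (A⁻¹ *ᵥ z)) = z ⬝ᵥ (A⁻¹ *ᵥ z) := by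
    rw [hzdef, key1]
  -- A⁻¹ *ᵥ z = μ + A⁻¹ *ᵥ u
  have hAinvz : A⁻¹ *ᵥ z = μ + A⁻¹ *ᵥ u := by
    rw [hz, Matrix.mulVec_add, Matrix.mulVec_mulVec, Matrix.nonsing_inv_mul _ hAdet,
      Matrix.one_mulVec, hudef]
  -- symmetric matrix dot swap
  have hswap : ∀ (a b : Fin p → ℝ), (A *ᵥ a) ⬝ᵥ b = a ⬝ᵥ (A *ᵥ b) := by
    intro a b
    rw [dotProduct_comm, Matrix.dotProduct_mulVec, ← Matrix.mulVec_transpose, hAsymm,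
      dotProduct_comm]
  have hcross : (A *ᵥ μ) ⬝ᵥ (A⁻¹ *ᵥ u) = μ ⬝ᵥ u := by
    rw [hswap, Matrix.mulVec_mulVec, Matrix.mul_nonsing_inv _ hAdet, Matrix.one_mulVec]
  -- expand RHS
  have hexp : z ⬝ᵥ (A⁻¹ *ᵥ z)
      = μ ⬝ᵥ (A *ᵥ μ) + u ⬝ᵥ μ + μ ⬝ᵥ u + u ⬝ᵥ (A⁻¹ *ᵥ u) := by
    rw [hAinvz, hz]
    rw [add_dotProduct, dotProduct_add, dotProduct_add, hcross]
    have h1 : (A *ᵥ μ) ⬝ᵥ μ = μ ⬝ᵥ (A *ᵥ μ) := dotProduct_comm _ _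
    rw [h1]
    ring
  -- nonnegativity
  have hu1 : 0 ≤ μ ⬝ᵥ u := by
    have := hE.posSemidef.dotProduct_mulVec_nonneg μ
    simpa [hudef] using this
  have hu2 : 0 ≤ u ⬝ᵥ μ := by rw [dotProduct_comm]; exact hu1
  have hu3 : 0 ≤ u ⬝ᵥ (A⁻¹ *ᵥ u) := by
    have := hA.inv.posSemidef.dotProduct_mulVec_nonneg u
    simpa using this
  rw [hLHS, hRHS, hexp]
  linarith
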